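/- arXiv:2506.10341 — 3 statements merged into one kernel-verified Lean document; each statement's English description precedes it below -/
import Mathlib

section
/- Let d = dim_TE(H, ℓ, ε) be finite. For any sequence of actions (a_1, ..., a_τ) with τ ≥ Kd + 1 for integer K, there exists some index j such that a_j is ε-transfer dependent on at least K disjoint subsequences of (a_1, ..., a_{j-1}). -/
/-- `x` is `ε`-transfer dependent on the subsequence of the trajectory `a`
indexed by the finite set `s`. -/
def DepOn {A H : Type*} (r : H → A → ℝ) (D : A → H → H → ℝ)
    (ε : ℝ) (x : A) (s : Finset ℕ) (a : ℕ → A) : Prop :=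
  ∀ η η' : H, (∑ i ∈ s, D (a i) η' η) ≤ ε ^ 2 → |r η x - r η' x| ≤ ε

/-- The `ε`-transfer eluder dimension: the length of the longest action sequence
each of whose elements is `ε'`-transfer independent of its predecessors, for some
`ε' ≥ ε`. -/
noncomputable def dimTE {A H : Type*} (r : H → A → ℝ) (D : A → H → H → ℝ)
    (ε : ℝ) : ℕ∞ :=
  sSup {n : ℕ∞ | ∃ (m : ℕ) (a : ℕ → A) (ε' : ℝ), ε ≤ ε' ∧ n = (m : ℕ∞) ∧
    ∀ i < m, ¬ DepOn r D ε' (a i) (Finset.range i) a}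

/-- A finset of indices each of whose elements is independent of its
predecessors within the finset. -/
def TChain {A H : Type*} (r : H → A → ℝ) (D : A → H → H → ℝ)
    (ε : ℝ) (a : ℕ → A) (s : Finset ℕ) : Prop :=
  ∀ i ∈ s, ¬ DepOn r D ε (a i) (s.filter (· < i)) a

lemma tchain_insert {A H : Type*} {r : H → A → ℝ} {D : A → H → H → ℝ}
    {ε : ℝ} {a : ℕ → A} {s : Finset ℕ} {j : ℕ}
    (hsub : s ⊆ Finset.range j) (hch : TChain r D ε a s)
    (hj : ¬ DepOn r D ε (a j) s a) : TChain r D ε a (insert j s) := by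
  intro i hi
  rcases Finset.mem_insert.mp hi with rfl | hi
  · have : (insert i s).filter (· < i) = s := by
      rw [Finset.filter_insert, if_neg (lt_irrefl i)]
      exact Finset.filter_true_of_mem fun x hx => Finset.mem_range.mp (hsub hx)
    rwa [this]
  · have hij : i < j := Finset.mem_range.mp (hsub hi)
    have : (insert j s).filter (· < i) = s.filter (· < i) := by
      rw [Finset.filter_insert, if_neg (by omega)]
    rw [this]
    exact hch i hi

lemma tchain_card_le {A H : Type*} {r : H → A → ℝ} {D : A → H → H → ℝ}
    {ε : ℝ} {a : ℕ → A} {d : ℕ} (hd : dimTE r D ε = (d : ℕ∞))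
    {s : Finset ℕ} (hs : TChain r D ε a s) : s.card ≤ d := by
  set n := s.card with hn
  have hcard : s.card = n := hn.symm
  set e := s.orderEmbOfFin hcard with he
  set b : ℕ → A := fun t => if h : t < n then a (e ⟨t, h⟩) else a 0 with hb
  have hmem : (n : ℕ∞) ∈ {n : ℕ∞ | ∃ (m : ℕ) (a : ℕ → A) (ε' : ℝ), ε ≤ ε' ∧ n = (m : ℕ∞) ∧
      ∀ i < m, ¬ DepOn r D ε' (a i) (Finset.range i) a} := by
    refine ⟨n, b, ε, le_refl _, rfl, ?_⟩
    intro t ht hdep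
    apply hs (e ⟨t, ht⟩) (s.orderEmbOfFin_mem hcard _)
    intro η η' hsum
    have hbt : b t = a (e ⟨t, ht⟩) := dif_pos ht
    have hsum' : ∑ i ∈ Finset.range t, D (b i) η' η
        = ∑ v ∈ s.filter (· < e ⟨t, ht⟩), D (a v) η' η := by
      refine Finset.sum_bij
        (fun u hu => e ⟨u, lt_trans (Finset.mem_range.mp hu) ht⟩) ?_ ?_ ?_ ?_
      · intro u hu
        refine Finset.mem_filter.mpr ⟨s.orderEmbOfFin_mem hcard _, ?_⟩
        exact e.strictMono (Fin.mk_lt_mk.mpr (Finset.mem_range.mp hu))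
      · intro u₁ hu₁ u₂ hu₂ hval
        exact congrArg Fin.val (e.injective hval)
      · intro v hv
        obtain ⟨hv₁, hv₂⟩ := Finset.mem_filter.mp hv
        have : v ∈ Set.range e := by
          rw [Finset.range_orderEmbOfFin]; exact hv₁
        obtain ⟨m, hm⟩ := this
        have hmt : (m : ℕ) < t := by
          have : m < (⟨t, ht⟩ : Fin n) := e.strictMono.lt_iff_lt.mp (by rw [hm]; exact hv₂)
          exact this
        exact ⟨m, Finset.mem_range.mpr hmt, by simpa using hm⟩
      · intro u hu
        have : b u = a (e ⟨u, lt_trans (Finset.mem_range.mp hu) ht⟩) :=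
          dif_pos (lt_trans (Finset.mem_range.mp hu) ht)
        rw [this]
    have := hdep η η' (by rw [hsum']; exact hsum)
    rwa [hbt] at this
  have hle : (n : ℕ∞) ≤ dimTE r D ε := le_sSup hmem
  rw [hd] at hle
  exact_mod_cast hle

/-- If `d = dim_TE(H,ℓ,ε)` is finite, then in any sequence of `τ ≥ K d + 1`
actions there is an index `j` such that `a_j` is `ε`-transfer dependent on at
least `K` pairwise disjoint subsequences of its predecessors. -/
theorem stmt7 {A H : Type*} (r : H → A → ℝ) (D : A → H → H → ℝ)
    (ε : ℝ) (hε : 0 < ε) (d K τ : ℕ)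
    (hd : dimTE r D ε = (d : ℕ∞)) (hτ : K * d + 1 ≤ τ) (a : ℕ → A) :
    ∃ j < τ, ∃ B : Fin K → Finset ℕ,
      (∀ k, B k ⊆ Finset.range j) ∧
      (∀ k k', k ≠ k' → Disjoint (B k) (B k')) ∧
      (∀ k, DepOn r D ε (a j) (B k) a) := by
  classical
  by_contra hcon
  push_neg at hcon
  -- hcon : ∀ j < τ, ∀ B, subsets → disjoint → ∃ k, ¬ DepOn …
  set step : ℕ → (Fin K → Finset ℕ) → (Fin K → Finset ℕ) := fun j B =>
    if hc : j < τ ∧ (∀ k, B k ⊆ Finset.range j) ∧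
        (∀ k k', k ≠ k' → Disjoint (B k) (B k')) then
      Function.update B (Classical.choose (hcon j hc.1 B hc.2.1 hc.2.2))
        (insert j (B (Classical.choose (hcon j hc.1 B hc.2.1 hc.2.2))))
    else B with hstepdef
  set F : ℕ → Fin K → Finset ℕ :=
    fun j => Nat.rec (fun _ => ∅) (fun j B => step j B) j with hF
  have key : ∀ j, j ≤ τ → (∀ k, F j k ⊆ Finset.range j) ∧
      (∀ k k', k ≠ k' → Disjoint (F j k) (F j k')) ∧
      (∀ k, TChain r D ε a (F j k)) ∧
      (∑ k, (F j k).card) = j := by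
    intro j
    induction j with
    | zero =>
      intro _
      refine ⟨fun k => by simp [hF], fun k k' _ => by simp [hF], fun k => ?_, by simp [hF]⟩
      intro i hi
      simp [hF] at hi
    | succ j ih =>
      intro hj
      obtain ⟨h1, h2, h3, h4⟩ := ih (Nat.le_of_succ_le hj)
      have hjτ : j < τ := hj
      have hc : j < τ ∧ (∀ k, F j k ⊆ Finset.range j) ∧
          (∀ k k', k ≠ k' → Disjoint (F j k) (F j k')) := ⟨hjτ, h1, h2⟩
      set k0 := Classical.choose (hcon j hc.1 (F j) hc.2.1 hc.2.2) with hk0def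
      have hk0 : ¬ DepOn r D ε (a j) (F j k0) a :=
        Classical.choose_spec (hcon j hc.1 (F j) hc.2.1 hc.2.2)
      have hFs : F (j + 1) = Function.update (F j) k0 (insert j (F j k0)) := by
        show step j (F j) = _
        rw [hstepdef]
        simp only [dif_pos hc]
        rfl
      have hval : ∀ k, F (j + 1) k = if k = k0 then insert j (F j k0) else F j k := by
        intro k
        rw [hFs, Function.update]
        simp
      have hsub' : ∀ k, F (j + 1) k ⊆ Finset.range (j + 1) := by
        intro k
        rw [hval k]
        split
        · intro x hx
          rcases Finset.mem_insert.mp hx with rfl | hx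
          · exact Finset.self_mem_range_succ _
          · exact Finset.range_subset_range.mpr (Nat.le_succ j) (h1 k0 hx)
        · exact (h1 k).trans (Finset.range_subset_range.mpr (Nat.le_succ j))
      have hnotmem : ∀ k, j ∉ F j k := fun k hjk =>
        absurd (Finset.mem_range.mp (h1 k hjk)) (lt_irrefl j)
      refine ⟨hsub', ?_, ?_, ?_⟩
      · intro k k' hkk'
        rw [hval k, hval k']
        have base := h2 k k' hkk'
        split <;> split
        · omega
        · rw [Finset.disjoint_insert_left]
          rename_i hk hk'
          subst hk
          exact ⟨hnotmem k', h2 k0 k' (by simpa using hkk')⟩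
        · rw [Finset.disjoint_insert_right]
          rename_i hk hk'
          subst hk'
          exact ⟨hnotmem k, h2 k k0 (by simpa using hkk')⟩
        · exact base
      · intro k
        rw [hval k]
        split
        · exact tchain_insert (h1 k0) (h3 k0) hk0
        · exact h3 k
      · have : ∑ k, (F (j + 1) k).card
            = (insert j (F j k0)).card + ∑ k ∈ Finset.univ \ {k0}, (F j k).card := by
          have hpt : ∀ k, (F (j + 1) k).card
              = Function.update (fun k => (F j k).card) k0 (insert j (F j k0)).card k := by
            intro k
            rw [hval k, Function.update_apply]
            split <;> rfl
          simp only [hpt]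
          exact Finset.sum_update_of_mem (Finset.mem_univ k0) _ _
        rw [this, Finset.card_insert_of_notMem (hnotmem k0)]
        have hsplit : ∑ k, (F j k).card
            = (F j k0).card + ∑ k ∈ Finset.univ \ {k0}, (F j k).card := by
          rw [add_comm, Finset.sum_eq_sum_sdiff_singleton_add (Finset.mem_univ k0)]
        omega
  obtain ⟨h1, h2, h3, h4⟩ := key τ le_rfl
  have hbound : ∀ k, (F τ k).card ≤ d := fun k => tchain_card_le hd (h3 k)
  have : (τ : ℕ) ≤ K * d := by
    calc τ = ∑ k, (F τ k).card := h4.symm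
    _ ≤ ∑ _k : Fin K, d := Finset.sum_le_sum fun k _ => hbound k
    _ = K * d := by simp [Finset.sum_const, mul_comm]
  omega
end

section
/- Consider the reasoning problem with demonstration feedback: the hypothesis space H consists of hypotheses η each with an answer sequence a*_η ∈ S^L; reward r_η(a) = 1{a = a*_η}; feedback is deterministic and equals a*_η regardless of the action; verifier loss ℓ(a, o, η) = 1{o ≠ a*_η}. Then for any ε with 0 < ε < 1, the ε-transfer eluder dimension dim_TE(H, ℓ, ε) ≤ 1. -/
open Classical in
/-- Demonstration feedback: each hypothesis `η` has an answer sequence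
`a*_η ∈ S^L`, reward `r_η(a) = 1{a = a*_η}`, the feedback always equals `a*_η`,
and the verifier loss is `ℓ(a,o,η) = 1{o ≠ a*_η}`; hence the expected loss of
`η` under feedback from `η'` is `1{a*_{η'} ≠ a*_η}`.  For `0 < ε < 1` the
`ε`-transfer eluder dimension is at most `1`. -/
theorem stmt10 {S Hy : Type*} (L : ℕ)
    (astar : Hy → (Fin L → S))
    (r : Hy → (Fin L → S) → ℝ)
    (hr : ∀ η a, r η a = if a = astar η then (1 : ℝ) else 0)
    (D : (Fin L → S) → Hy → Hy → ℝ)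
    (hD : ∀ a η' η, D a η' η = if astar η' = astar η then (0 : ℝ) else 1)
    (ε : ℝ) (hε0 : 0 < ε) (hε1 : ε < 1) :
    dimTE r D ε ≤ 1 := by
  apply sSup_le
  rintro n ⟨m, a, ε', hεε', rfl, hind⟩
  by_contra h
  have hm : 1 < m := by exact_mod_cast not_le.mp h
  apply hind 1 hm
  intro η η' hsum
  rcases le_or_gt 1 ε' with h1 | h1
  · have hb : |r η (a 1) - r η' (a 1)| ≤ 1 := by
      rw [hr, hr]; split_ifs <;> norm_num
    exact hb.trans h1
  · rw [Finset.range_one, Finset.sum_singleton, hD] at hsum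
    have heq : astar η' = astar η := by
      by_contra hne
      rw [if_neg hne] at hsum
      nlinarith
    rw [hr, hr, heq]
    simp only [sub_self, abs_zero]
    linarith
end

section
/- Let d = dim_TE(H,ℓ,ε) be the ε-transfer eluder dimension and suppose that along a trajectory (A_0, ..., A_{T-1}) each action A_t with width w_{V_t}(A_t) > ε is ε-transfer dependent on fewer than ⌊3β_T/ε²⌋ + 1 disjoint subsequences of its predecessors. Then the number of time steps t < T with w_{V_t}(A_t) > ε is at most (3β_T/ε² + 1)·d. -/
open Classical in
/-- Greedy bucket assignment. -/
noncomputable def buck {A H : Type*} (r : H → A → ℝ) (D : A → H → H → ℝ)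
    (ε : ℝ) (Aact : ℕ → A) (S : Finset ℕ) (K : ℕ) : ℕ → Fin (K + 1)
  | t =>
    if h : ∃ k : Fin (K + 1), ¬ DepOn r D ε (Aact t)
        (((Finset.range t).attach.filter
          (fun s => s.1 ∈ S ∧ buck r D ε Aact S K s.1 = k)).image Subtype.val) Aact
    then h.choose else 0
  decreasing_by all_goals first
    | exact Finset.mem_range.mp a.2
    | exact Finset.mem_range.mp s.2

open Classical in
lemma buck_image_eq {A H : Type*} (r : H → A → ℝ) (D : A → H → H → ℝ)
    (ε : ℝ) (Aact : ℕ → A) (S : Finset ℕ) (K : ℕ) (t : ℕ) (k : Fin (K + 1)) :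
    ((Finset.range t).attach.filter
        (fun s => s.1 ∈ S ∧ buck r D ε Aact S K s.1 = k)).image Subtype.val
      = (Finset.range t).filter (fun s => s ∈ S ∧ buck r D ε Aact S K s = k) := by
  ext s
  simp [Finset.mem_image, Finset.mem_filter, Finset.mem_attach, Finset.mem_range]
  tauto

/-- Any finset each of whose elements is independent of its predecessors within
the finset has cardinality at most `d`. -/
lemma card_le_of_indep {A H : Type*} (r : H → A → ℝ) (D : A → H → H → ℝ)
    (ε : ℝ) (d : ℕ) (hd : dimTE r D ε = (d : ℕ∞)) (Aact : ℕ → A) (F : Finset ℕ)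
    (hF : ∀ t ∈ F, ¬ DepOn r D ε (Aact t) (F.filter (· < t)) Aact) :
    F.card ≤ d := by
  set m := F.card with hm
  set e := F.orderIsoOfFin hm.symm with he
  set a' : ℕ → A := fun n => if h : n < m then Aact (e ⟨n, h⟩ : ℕ) else Aact 0 with ha'
  have hindep : ∀ i < m, ¬ DepOn r D ε (a' i) (Finset.range i) a' := by
    intro i hi hdep
    refine hF (e ⟨i, hi⟩ : ℕ) (e ⟨i, hi⟩).2 ?_
    intro η η' hsum
    have hsum' : (∑ j ∈ Finset.range i, D (a' j) η' η) ≤ ε ^ 2 := by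
      have : (∑ j ∈ Finset.range i, D (a' j) η' η)
          = ∑ s ∈ F.filter (· < (e ⟨i, hi⟩ : ℕ)), D (Aact s) η' η := by
        rw [← Fin.sum_univ_eq_sum_range]
        refine Finset.sum_bij (fun (j : Fin i) _ => ((e (j.castLE hi.le)) : ℕ))
          ?_ ?_ ?_ ?_
        · intro j _
          simp only [Finset.mem_filter]
          refine ⟨(e (j.castLE hi.le)).2, ?_⟩
          have : j.castLE hi.le < (⟨i, hi⟩ : Fin m) := by
            simp [Fin.lt_def, j.2]
          exact_mod_cast e.strictMono this
        · intro j _ j' _ hjj'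
          have := e.injective (Subtype.coe_injective hjj')
          exact Fin.castLE_injective hi.le this
        · intro s hs
          simp only [Finset.mem_filter] at hs
          obtain ⟨j', hj'⟩ := e.surjective ⟨s, hs.1⟩
          have h1 : ((e j' : ℕ)) < ((e ⟨i, hi⟩ : ℕ)) := by
            rw [hj']; exact hs.2
          have h2 : j' < (⟨i, hi⟩ : Fin m) :=
            e.lt_iff_lt.mp (Subtype.coe_lt_coe.mp h1)
          refine ⟨⟨j', h2⟩, Finset.mem_univ _, ?_⟩
          show ((e (Fin.castLE hi.le ⟨(j' : ℕ), h2⟩)) : ℕ) = s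
          rw [show Fin.castLE hi.le (⟨(j' : ℕ), h2⟩ : Fin i) = j' from Fin.ext rfl, hj']
        · intro j _
          have hji : (j : ℕ) < m := lt_of_lt_of_le j.2 hi.le
          simp only [ha']
          rw [dif_pos hji]
          congr 1
      rw [this]; exact hsum
    have := hdep η η' hsum'
    simpa [ha', dif_pos hi] using this
  have hmem : (m : ℕ∞) ∈ {n : ℕ∞ | ∃ (m' : ℕ) (a : ℕ → A) (ε' : ℝ), ε ≤ ε' ∧
      n = (m' : ℕ∞) ∧ ∀ i < m', ¬ DepOn r D ε' (a i) (Finset.range i) a} :=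
    ⟨m, a', ε, le_refl ε, rfl, hindep⟩
  have : (m : ℕ∞) ≤ dimTE r D ε := le_sSup hmem
  rw [hd] at this
  exact_mod_cast this


/-- If `d = dim_TE(H,ℓ,ε)` and along the trajectory every action `A_t` with
width `w_{V_t}(A_t) > ε` is `ε`-transfer dependent on fewer than
`⌊3β_T/ε²⌋ + 1` pairwise disjoint subsequences of its predecessors, then the
number of steps `t < T` with `w_{V_t}(A_t) > ε` is at most `(3β_T/ε² + 1)·d`. -/
theorem stmt14 {A H : Type*} (r : H → A → ℝ) (D : A → H → H → ℝ)
    (ε β : ℝ) (hε : 0 < ε) (hβ : 0 < β)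
    (d : ℕ) (hd : dimTE r D ε = (d : ℕ∞))
    (Aact : ℕ → A) (w : ℕ → ℝ) (T : ℕ)
    (hdep : ∀ t < T, ε < w t →
      ¬ ∃ B : Fin (⌊3 * β / ε ^ 2⌋₊ + 1) → Finset ℕ,
        (∀ k, B k ⊆ Finset.range t) ∧
        (∀ k k', k ≠ k' → Disjoint (B k) (B k')) ∧
        (∀ k, DepOn r D ε (Aact t) (B k) Aact)) :
    (((Finset.range T).filter fun t => ε < w t).card : ℝ) ≤
      (3 * β / ε ^ 2 + 1) * d := by
  classical
  set K := ⌊3 * β / ε ^ 2⌋₊ with hK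
  set S := (Finset.range T).filter (fun t => ε < w t) with hS
  set f := buck r D ε Aact S K with hf
  have key : ∀ t ∈ S, ¬ DepOn r D ε (Aact t)
      ((Finset.range t).filter (fun s => s ∈ S ∧ f s = f t)) Aact := by
    intro t ht
    have hmem := Finset.mem_filter.mp ht
    have htT : t < T := Finset.mem_range.mp hmem.1
    have hw : ε < w t := hmem.2
    have hex : ∃ k : Fin (K + 1), ¬ DepOn r D ε (Aact t)
        (((Finset.range t).attach.filter
          (fun s => s.1 ∈ S ∧ buck r D ε Aact S K s.1 = k)).image Subtype.val) Aact := by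
      by_contra hcon
      push_neg at hcon
      refine hdep t htT hw ⟨fun k => (Finset.range t).filter (fun s => s ∈ S ∧ f s = k),
        fun k => Finset.filter_subset _ _, ?_, ?_⟩
      · intro k k' hkk'
        rw [Finset.disjoint_left]
        intro s hs hs'
        simp only [Finset.mem_filter] at hs hs'
        exact hkk' (hs.2.2 ▸ hs'.2.2 ▸ rfl)
      · intro k
        have := hcon k
        rwa [buck_image_eq] at this
    have hft : f t = hex.choose := by
      rw [hf]
      conv_lhs => rw [buck]
      rw [dif_pos hex]
    have := hex.choose_spec
    rw [buck_image_eq] at this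
    rw [hft]
    exact this
  have hfibcard : ∀ k : Fin (K + 1), (S.filter (fun s => f s = k)).card ≤ d := by
    intro k
    refine card_le_of_indep r D ε d hd Aact _ ?_
    intro t ht
    have hmem := Finset.mem_filter.mp ht
    have hset : (S.filter (fun s => f s = k)).filter (· < t)
        = (Finset.range t).filter (fun s => s ∈ S ∧ f s = f t) := by
      ext s
      simp only [Finset.mem_filter, Finset.mem_range, hmem.2]
      tauto
    rw [hset]
    exact key t hmem.1
  have hcards : S.card = ∑ k : Fin (K + 1), (S.filter (fun s => f s = k)).card :=
    Finset.card_eq_sum_card_fiberwise (fun x _ => Finset.mem_univ (f x))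
  have hcard : S.card ≤ (K + 1) * d := by
    rw [hcards]
    calc ∑ k : Fin (K + 1), (S.filter (fun s => f s = k)).card
        ≤ ∑ _k : Fin (K + 1), d := Finset.sum_le_sum (fun k _ => hfibcard k)
      _ = (K + 1) * d := by simp [Finset.sum_const, mul_comm]
  have hKle : (K : ℝ) ≤ 3 * β / ε ^ 2 := Nat.floor_le (by positivity)
  have : (S.card : ℝ) ≤ ((K + 1) * d : ℕ) := by exact_mod_cast hcard
  refine this.trans ?_
  push_cast
  have hd0 : (0 : ℝ) ≤ (d : ℝ) := Nat.cast_nonneg d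
  nlinarith
end
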